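/- For any linear operator O on a finite-dimensional Hilbert space and any permutation ρ ∈ S_k, the trace of O^{⊗k} composed with the permutation operator T_ρ (which permutes the k tensor factors) equals the product over the disjoint cycles α of ρ of Tr[O^{|α|}], where |α| is the length of the cycle. -/

import Mathlib

open Matrix BigOperators
open scoped Classical

/-- Tensor power of a matrix: `O^{⊗k}` acting on `ι^k`. -/
noncomputable def tensorPow {ι : Type} [Fintype ι] (O : Matrix ι ι ℂ) (k : ℕ) :
    Matrix (Fin k → ι) (Fin k → ι) ℂ :=
  fun x y => ∏ i, O (x i) (y i)

/-- Permutation operator `T_ρ` on `H^{⊗k}`: `T_ρ (v_1 ⊗ ⋯ ⊗ v_k) = v_{ρ⁻¹(1)} ⊗ ⋯`. -/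
noncomputable def permOp (ι : Type) [Fintype ι] {k : ℕ} (ρ : Equiv.Perm (Fin k)) :
    Matrix (Fin k → ι) (Fin k → ι) ℂ :=
  fun x y => if x = y ∘ ρ.symm then 1 else 0

/-- Unnormalized projector onto symmetric subspace. -/
noncomputable def symProj (ι : Type) [Fintype ι] (k : ℕ) :
    Matrix (Fin k → ι) (Fin k → ι) ℂ :=
  ∑ ρ : Equiv.Perm (Fin k), permOp ι ρ

/-- Single-qubit Pauli matrices I, X, Y, Z. -/
noncomputable def pauli : Fin 4 → Matrix (Fin 2) (Fin 2) ℂ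
  | 0 => 1
  | 1 => !![0, 1; 1, 0]
  | 2 => !![0, -Complex.I; Complex.I, 0]
  | 3 => !![1, 0; 0, -1]

/-- Pauli string `P_{s 0} ⊗ ⋯ ⊗ P_{s (n-1)}` on `n` qubits. -/
noncomputable def pauliString {n : ℕ} (s : Fin n → Fin 4) :
    Matrix (Fin n → Fin 2) (Fin n → Fin 2) ℂ :=
  fun x y => ∏ i, pauli (s i) (x i) (y i)

/-- `Q = (1/d²) Σ_P P^{⊗4}` on `(ℂ^d)^{⊗4}`, `d = 2^n`. -/
noncomputable def Qop (n : ℕ) :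
    Matrix (Fin 4 → (Fin n → Fin 2)) (Fin 4 → (Fin n → Fin 2)) ℂ :=
  (((2 : ℂ) ^ n) ^ 2)⁻¹ • ∑ s : Fin n → Fin 4, tensorPow (pauliString s) 4

section Helpers
variable {ι : Type} [Fintype ι]

/-- Fundamental sum attached to a permutation. -/
noncomputable def permSum (O : Matrix ι ι ℂ) {β : Type} [Fintype β] [DecidableEq β]
    (σ : Equiv.Perm β) : ℂ :=
  ∑ x : β → ι, ∏ i, O (x i) (x (σ⁻¹ i))

lemma permSum_isEmpty (O : Matrix ι ι ℂ) {β : Type} [Fintype β] [DecidableEq β] [IsEmpty β]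
    (σ : Equiv.Perm β) : permSum O σ = 1 := by
  simp [permSum, Finset.univ_eq_empty (α := β)]

lemma permSum_one (O : Matrix ι ι ℂ) (β : Type) [Fintype β] [DecidableEq β] :
    permSum O (1 : Equiv.Perm β) = O.trace ^ Fintype.card β := by
  classical
  have : O.trace ^ Fintype.card β = ∏ _i : β, ∑ v : ι, O v v := by
    simp [Matrix.trace, Matrix.diag, Finset.prod_const, Finset.card_univ]
  rw [this, Finset.prod_univ_sum]
  simp [permSum]

lemma permSum_congr (O : Matrix ι ι ℂ) {β γ : Type} [Fintype β] [DecidableEq β] [Fintype γ] [DecidableEq γ]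
    (e : β ≃ γ) (σ : Equiv.Perm β) (τ : Equiv.Perm γ)
    (h : ∀ i, e (σ i) = τ (e i)) : permSum O σ = permSum O τ := by
  have hinv : ∀ i : β, e (σ⁻¹ i) = τ⁻¹ (e i) := by
    intro i
    have := h (σ⁻¹ i)
    rw [show σ (σ⁻¹ i) = i from σ.apply_symm_apply i] at this
    rw [this, show τ⁻¹ (τ (e (σ⁻¹ i))) = e (σ⁻¹ i) from τ.symm_apply_apply _]
  unfold permSum
  apply Fintype.sum_equiv (Equiv.arrowCongr e (Equiv.refl ι))
  intro x
  apply Fintype.prod_equiv e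
  intro i
  simp [Equiv.arrowCongr, ← hinv]

lemma permSum_split (O : Matrix ι ι ℂ) {β : Type} [Fintype β] [DecidableEq β] (π : Equiv.Perm β)
    (p : β → Prop) [DecidablePred p] (h : ∀ i, p (π i) ↔ p i) :
    permSum O π = permSum O (π.subtypePerm h) *
      permSum O (π.subtypePerm (fun i => not_congr (h i)) : Equiv.Perm {i // ¬ p i}) := by
  classical
  have h2 : (∑ x : {i // p i} → ι, ∏ i, O (x i) (x ((π.subtypePerm h)⁻¹ i))) *
      (∑ x : {i // ¬ p i} → ι, ∏ i,
        O (x i) (x ((π.subtypePerm (fun i => not_congr (h i)))⁻¹ i))) =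
      ∑ y : ({i // p i} → ι) × ({i // ¬ p i} → ι),
        (∏ i, O (y.1 i) (y.1 ((π.subtypePerm h)⁻¹ i))) *
        (∏ i, O (y.2 i) (y.2 ((π.subtypePerm (fun i => not_congr (h i)))⁻¹ i))) := by
    exact (Finset.sum_mul_sum Finset.univ Finset.univ _ _).trans
      (Fintype.sum_prod_type (f := fun y : ({i // p i} → ι) × ({i // ¬ p i} → ι) => (∏ i, O (y.1 i) (y.1 ((π.subtypePerm h)⁻¹ i))) *
        (∏ i, O (y.2 i) (y.2 ((π.subtypePerm (fun i => not_congr (h i)))⁻¹ i))))).symm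
  rw [permSum, permSum, permSum]
  refine Eq.trans ?_ h2.symm
  apply Fintype.sum_equiv (Equiv.piEquivPiSubtypeProd p (fun _ => ι))
  intro x
  rw [← Fintype.prod_subtype_mul_prod_subtype p (fun i => O (x i) (x (π⁻¹ i)))]
  congr 1

set_option linter.deprecated false

lemma chain_sum (O : Matrix ι ι ℂ) : ∀ (n : ℕ) (a b : ι),
    (∑ x : Fin n → ι, ∏ j : Fin (n+1),
      O ((Fin.cons a (Fin.snoc x b) : Fin (n+2) → ι) j.castSucc)
        ((Fin.cons a (Fin.snoc x b) : Fin (n+2) → ι) j.succ)) = (O ^ (n+1)) a b := by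
  intro n
  induction n with
  | zero =>
    intro a b
    simp [Fin.prod_univ_one, Fin.snoc]
  | succ n ih =>
    intro a b
    calc (∑ x : Fin (n+1) → ι, ∏ j : Fin (n+2),
          O ((Fin.cons a (Fin.snoc x b) : Fin (n+3) → ι) j.castSucc)
            ((Fin.cons a (Fin.snoc x b) : Fin (n+3) → ι) j.succ))
        = ∑ x : Fin (n+1) → ι, O a (x 0) * ∏ j : Fin (n+1),
            O ((Fin.cons (x 0) (Fin.snoc (Fin.tail x) b) : Fin (n+2) → ι) j.castSucc)
              ((Fin.cons (x 0) (Fin.snoc (Fin.tail x) b) : Fin (n+2) → ι) j.succ) := by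
          apply Finset.sum_congr rfl
          intro x _
          have hv : (Fin.snoc x b : Fin (n+2) → ι)
              = Fin.cons (x 0) (Fin.snoc (Fin.tail x) b) := by
            rw [Fin.cons_snoc_eq_snoc_cons, Fin.cons_self_tail]
          rw [Fin.prod_univ_succ]
          congr 1
          · rw [hv]
            simp
      _ = ∑ y : ι × (Fin n → ι), O a y.1 * ∏ j : Fin (n+1),
            O ((Fin.cons y.1 (Fin.snoc y.2 b) : Fin (n+2) → ι) j.castSucc)
              ((Fin.cons y.1 (Fin.snoc y.2 b) : Fin (n+2) → ι) j.succ) := by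
          apply Fintype.sum_equiv ((Fin.consEquiv (fun _ => ι)).symm)
          intro x
          rfl
      _ = ∑ c : ι, O a c * ∑ x : Fin n → ι, ∏ j : Fin (n+1),
            O ((Fin.cons c (Fin.snoc x b) : Fin (n+2) → ι) j.castSucc)
              ((Fin.cons c (Fin.snoc x b) : Fin (n+2) → ι) j.succ) := by
          rw [Fintype.sum_prod_type]
          simp [Finset.mul_sum]
      _ = ∑ c : ι, O a c * (O ^ (n+1)) c b := by
          simp only [ih]
      _ = (O ^ (n+2)) a b := by
          rw [pow_succ' O (n+1), Matrix.mul_apply]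

lemma cyc_sum (O : Matrix ι ι ℂ) (n : ℕ) :
    (∑ x : Fin (n+1) → ι, ∏ j : Fin (n+1), O (x j) (x (j+1))) = (O ^ (n+1)).trace := by
  have key : ∀ (a : ι) (x : Fin n → ι) (j : Fin (n+1)),
      O ((Fin.cons a x : Fin (n+1) → ι) j) ((Fin.cons a x : Fin (n+1) → ι) (j+1))
      = O ((Fin.cons a (Fin.snoc x a) : Fin (n+2) → ι) j.castSucc)
          ((Fin.cons a (Fin.snoc x a) : Fin (n+2) → ι) j.succ) := by
    intro a x j
    have h1 : (Fin.cons a (Fin.snoc x a) : Fin (n+2) → ι)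
        = Fin.snoc (Fin.cons a x) a := Fin.cons_snoc_eq_snoc_cons a x a
    congr 1
    · rw [h1, Fin.snoc_castSucc]
    · rw [Fin.cons_succ]
      refine Fin.lastCases ?_ ?_ j
      · rw [Fin.snoc_last, Fin.last_add_one, Fin.cons_zero]
      · intro i
        rw [Fin.snoc_castSucc, Fin.coeSucc_eq_succ, Fin.cons_succ]
  calc (∑ x : Fin (n+1) → ι, ∏ j : Fin (n+1), O (x j) (x (j+1)))
      = ∑ y : ι × (Fin n → ι), ∏ j : Fin (n+1),
          O ((Fin.cons y.1 y.2 : Fin (n+1) → ι) j) ((Fin.cons y.1 y.2 : Fin (n+1) → ι) (j+1)) := by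
        apply Fintype.sum_equiv ((Fin.consEquiv (fun _ => ι)).symm)
        intro x
        have hx : (Fin.cons (((Fin.consEquiv (fun _ => ι)).symm) x).1 (((Fin.consEquiv (fun _ => ι)).symm) x).2
            : Fin (n+1) → ι) = x := Fin.cons_self_tail x
        rw [hx]
    _ = ∑ a : ι, ∑ x : Fin n → ι, ∏ j : Fin (n+1),
          O ((Fin.cons a x : Fin (n+1) → ι) j) ((Fin.cons a x : Fin (n+1) → ι) (j+1)) :=
        Fintype.sum_prod_type _
    _ = ∑ a : ι, (O ^ (n+1)) a a := by
        apply Finset.sum_congr rfl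
        intro a _
        rw [← chain_sum O n a a]
        apply Finset.sum_congr rfl
        intro x _
        exact Finset.prod_congr rfl (fun j _ => key a x j)
    _ = (O ^ (n+1)).trace := rfl

lemma permSum_subtypePerm_isCycle (O : Matrix ι ι ℂ) {β : Type} [Fintype β] [DecidableEq β]
    (c : Equiv.Perm β) (hc : c.IsCycle)
    (h : ∀ i, c i ∈ c.support ↔ i ∈ c.support) :
    permSum O (c.subtypePerm h) = (O ^ c.support.card).trace := by
  obtain ⟨a, ha, -⟩ := id hc
  have haS : a ∈ c.support := Equiv.Perm.mem_support.mpr ha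
  have horder : orderOf c = c.support.card := Equiv.Perm.IsCycle.orderOf hc
  obtain ⟨n, hn⟩ : ∃ n, c.support.card = n + 1 := by
    have := Finset.card_pos.mpr ⟨a, haS⟩
    exact ⟨c.support.card - 1, by omega⟩
  have hmem : ∀ j : ℕ, (c ^ j) a ∈ c.support :=
    fun j => Equiv.Perm.pow_apply_mem_support.mpr haS
  set f : Fin (n+1) → {i // i ∈ c.support} :=
    fun j => ⟨(c ^ (j : ℕ)) a, hmem _⟩ with hf
  have hinj : Function.Injective f := by
    have key : ∀ i j : Fin (n+1), (i : ℕ) ≤ (j : ℕ) → f i = f j → i = j := by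
      intro i j hle hij
      have hij' : (c ^ (i : ℕ)) a = (c ^ (j : ℕ)) a := congrArg Subtype.val hij
      have h1 : (c ^ ((j:ℕ) - (i:ℕ))) ((c ^ (i:ℕ)) a) = (c ^ (i:ℕ)) a := by
        rw [← Equiv.Perm.mul_apply, ← pow_add, Nat.sub_add_cancel hle]
        exact hij'.symm
      have hx : c ((c ^ (i:ℕ)) a) ≠ (c ^ (i:ℕ)) a :=
        Equiv.Perm.mem_support.mp (hmem _)
      have hpow : c ^ ((j:ℕ) - (i:ℕ)) = 1 := (Equiv.Perm.IsCycle.pow_eq_one_iff' hc hx).mpr h1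
      have hdvd : orderOf c ∣ (j:ℕ) - (i:ℕ) := orderOf_dvd_of_pow_eq_one hpow
      rw [horder, hn] at hdvd
      have hj : (j : ℕ) < n + 1 := j.2
      have : (j:ℕ) - (i:ℕ) = 0 := by
        rcases Nat.eq_zero_or_pos ((j:ℕ) - (i:ℕ)) with h0 | h0
        · exact h0
        · exact absurd (Nat.le_of_dvd h0 hdvd) (by omega)
      exact Fin.ext (by omega)
    intro i j hij
    rcases le_total (i : ℕ) (j : ℕ) with hle | hle
    · exact key i j hle hij
    · exact (key j i hle hij.symm).symm
  have hcard : Fintype.card (Fin (n+1)) = Fintype.card {i // i ∈ c.support} := by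
    rw [Fintype.card_fin, Fintype.card_coe, hn]
  let e : Fin (n+1) ≃ {i // i ∈ c.support} :=
    Equiv.ofBijective f ((Fintype.bijective_iff_injective_and_card f).mpr ⟨hinj, hcard⟩)
  have hsucc : ∀ j : Fin (n+1), e ((Equiv.addRight (1 : Fin (n+1))) j)
      = (c.subtypePerm h) (e j) := by
    intro j
    apply Subtype.ext
    show (c ^ (((j + 1 : Fin (n+1))) : ℕ)) a = c ((c ^ (j : ℕ)) a)
    have h2 : c ((c ^ (j:ℕ)) a) = (c ^ ((j:ℕ) + 1)) a := by
      rw [pow_succ' c, Equiv.Perm.mul_apply]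
    rw [h2]
    have h3 : (((j + 1 : Fin (n+1))) : ℕ) = ((j:ℕ) + 1) % (n + 1) := by
      simp [Fin.add_def]
    have h4 : ∀ N : ℕ, c ^ (N % (n + 1)) = c ^ N := by
      intro N
      rw [← hn, ← horder]
      exact pow_mod_orderOf c N
    rw [h3, h4]
  have step1 : permSum O (c.subtypePerm h) = permSum O (Equiv.addRight (1 : Fin (n+1))) :=
    (permSum_congr O e (Equiv.addRight (1 : Fin (n+1))) (c.subtypePerm h) hsucc).symm
  rw [step1, hn]
  have hinv : ∀ j : Fin (n+1), (Equiv.addRight (1 : Fin (n+1)))⁻¹ j = j - 1 := by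
    intro j
    have hj : (Equiv.addRight (1 : Fin (n+1))) (j - 1) = j := by
      show j - 1 + 1 = j
      abel
    conv_lhs => rw [← hj]
    exact Equiv.symm_apply_apply _ _
  calc permSum O (Equiv.addRight (1 : Fin (n+1)))
      = ∑ x : Fin (n+1) → ι, ∏ j : Fin (n+1), O (x j) (x (j - 1)) := by
        unfold permSum
        apply Finset.sum_congr rfl
        intro x _
        exact Finset.prod_congr rfl (fun j _ => by rw [hinv])
    _ = ∑ x : Fin (n+1) → ι, ∏ j : Fin (n+1), O (x j) (x (j + 1)) := by
        let negE : Fin (n+1) ≃ Fin (n+1) :=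
          ⟨fun j => -j, fun j => -j, fun j => neg_neg j, fun j => neg_neg j⟩
        let negA : (Fin (n+1) → ι) ≃ (Fin (n+1) → ι) :=
          ⟨fun x j => x (-j), fun x j => x (-j),
            fun x => funext (fun j => by simp),
            fun x => funext (fun j => by simp)⟩
        apply Fintype.sum_equiv negA
        intro x
        apply Fintype.prod_equiv negE
        intro j
        have t2 : -(-j + 1) = j - 1 := by abel
        show O (x j) (x (j - 1)) = O (x (-(-j))) (x (-(-j + 1)))
        rw [neg_neg, t2]
    _ = (O ^ (n+1)).trace := cyc_sum O n

lemma permSum_support_eq (O : Matrix ι ι ℂ) {β : Type} [Fintype β] [DecidableEq β]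
    (σ : Equiv.Perm β) (h : ∀ i, σ i ∈ σ.support ↔ i ∈ σ.support) :
    permSum O (σ.subtypePerm h) = ∏ c ∈ σ.cycleFactorsFinset, (O ^ c.support.card).trace := by
  revert h
  induction σ using Equiv.Perm.cycle_induction_on with
  | base_one =>
    intro h
    have : IsEmpty {i : β // i ∈ (1 : Equiv.Perm β).support} :=
      ⟨fun i => by simpa using i.2⟩
    rw [permSum_isEmpty, Equiv.Perm.cycleFactorsFinset_one, Finset.prod_empty]
  | base_cycles σ hσ =>
    intro h
    rw [permSum_subtypePerm_isCycle O σ hσ h, hσ.cycleFactorsFinset_eq_singleton,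
      Finset.prod_singleton]
  | induction_disjoint σ τ hd hc ihσ ihτ =>
    intro h
    have hsupp : (σ * τ).support = σ.support ∪ τ.support := hd.support_mul
    have hτfix : ∀ i, i ∈ σ.support → τ i = i := fun i hi =>
      ((hd i).resolve_left (Equiv.Perm.mem_support.mp hi))
    have hσfix : ∀ i, i ∈ τ.support → σ i = i := fun i hi =>
      ((hd i).resolve_right (Equiv.Perm.mem_support.mp hi))
    have hcomm : Commute (σ * τ) σ := Commute.mul_left (Commute.refl σ) hd.commute.symm
    have hp : ∀ i : {i // i ∈ (σ * τ).support},
        (((σ * τ).subtypePerm h) i : β) ∈ σ.support ↔ (i : β) ∈ σ.support := by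
      intro i
      exact Equiv.Perm.mem_support_iff_of_commute hcomm (i : β)
    rw [permSum_split O ((σ * τ).subtypePerm h) (fun i => (i : β) ∈ σ.support) hp]
    have hsubσ : σ.support ⊆ (σ * τ).support := by
      rw [hsupp]; exact Finset.subset_union_left
    have hdis : _root_.Disjoint σ.support τ.support := hd.disjoint_support
    -- first factor
    let e1 : {i : {i // i ∈ (σ * τ).support} // (i : β) ∈ σ.support}
        ≃ {i // i ∈ σ.support} :=
      Equiv.subtypeSubtypeEquivSubtype (fun {x} hx => hsubσ hx)
    have hσmem : ∀ i, σ i ∈ σ.support ↔ i ∈ σ.support :=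
      fun i => (Equiv.Perm.apply_mem_support)
    have hcongr1 : ∀ i, e1 ((((σ * τ).subtypePerm h).subtypePerm (p := fun i : {i // i ∈ (σ * τ).support} => (i : β) ∈ σ.support) hp) i)
        = (σ.subtypePerm hσmem) (e1 i) := by
      intro i
      apply Subtype.ext
      show (σ * τ) ((i : β)) = σ ((i : β))
      rw [Equiv.Perm.mul_apply, hτfix _ i.2]
    have fac1 : permSum O (((σ * τ).subtypePerm h).subtypePerm (p := fun i : {i // i ∈ (σ * τ).support} => (i : β) ∈ σ.support) hp)
        = ∏ c ∈ σ.cycleFactorsFinset, (O ^ c.support.card).trace := by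
      rw [permSum_congr O e1 _ (σ.subtypePerm hσmem) hcongr1]
      exact ihσ hσmem
    -- second factor
    let e2 : {i : {i // i ∈ (σ * τ).support} // ¬ (i : β) ∈ σ.support}
        ≃ {i // i ∈ τ.support} :=
      { toFun := fun i => ⟨(i : β),
          (Finset.mem_union.mp (hsupp ▸ i.1.2)).resolve_left i.2⟩
        invFun := fun i => ⟨⟨(i : β), by
          rw [hsupp]; exact Finset.mem_union_right _ i.2⟩,
          fun hσi => (Finset.disjoint_left.mp hdis hσi) i.2⟩
        left_inv := fun i => rfl
        right_inv := fun i => rfl }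
    have hτmem : ∀ i, τ i ∈ τ.support ↔ i ∈ τ.support :=
      fun i => (Equiv.Perm.apply_mem_support)
    have hcongr2 : ∀ i, e2 ((((σ * τ).subtypePerm h).subtypePerm
        (p := fun i : {i // i ∈ (σ * τ).support} => ¬ (i : β) ∈ σ.support) (fun i => not_congr (hp i))) i) = (τ.subtypePerm hτmem) (e2 i) := by
      intro i
      apply Subtype.ext
      show (σ * τ) ((i : β)) = τ ((i : β))
      have hiτ : (i : β) ∈ τ.support :=
        (Finset.mem_union.mp (hsupp ▸ i.1.2)).resolve_left i.2
      rw [Equiv.Perm.mul_apply]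
      by_cases hτi : τ (i : β) ∈ σ.support
      · exfalso
        have : τ (i : β) ∈ τ.support := by
          rwa [Equiv.Perm.apply_mem_support]
        exact (Finset.disjoint_left.mp hdis hτi) this
      · exact Equiv.Perm.notMem_support.mp hτi
    have fac2 : permSum O (((σ * τ).subtypePerm h).subtypePerm
        (p := fun i : {i // i ∈ (σ * τ).support} => ¬ (i : β) ∈ σ.support) (fun i => not_congr (hp i)))
        = ∏ c ∈ τ.cycleFactorsFinset, (O ^ c.support.card).trace := by
      rw [permSum_congr O e2 _ (τ.subtypePerm hτmem) hcongr2]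
      exact ihτ hτmem
    rw [fac1, fac2, hd.cycleFactorsFinset_mul_eq_union,
      Finset.prod_union hd.disjoint_cycleFactorsFinset]

end Helpers

/-- `Tr[O^{⊗k} T_ρ] = ∏_{cycles α of ρ} Tr[O^{|α|}]`, where fixed
points of `ρ` count as 1-cycles each contributing `Tr[O]`. -/
theorem trace_tensorPow_permOp {ι : Type} [Fintype ι] (k : ℕ)
    (O : Matrix ι ι ℂ) (ρ : Equiv.Perm (Fin k)) :
    (tensorPow O k * permOp ι ρ).trace =
      (∏ c ∈ ρ.cycleFactorsFinset, (O ^ c.support.card).trace) *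
        O.trace ^ (k - ρ.support.card) := by
  have h1 : (tensorPow O k * permOp ι ρ).trace = permSum O ρ := by
    rw [Matrix.trace]
    apply Finset.sum_congr rfl
    intro x _
    rw [Matrix.diag_apply, Matrix.mul_apply]
    simp only [tensorPow, permOp, mul_ite, mul_one, mul_zero]
    rw [Finset.sum_ite_eq' Finset.univ (x ∘ ρ.symm)
      (fun y => ∏ i, O (x i) (y i))]
    simp only [Finset.mem_univ, if_true]
    rfl
  rw [h1]
  have hmem : ∀ i, ρ i ∈ ρ.support ↔ i ∈ ρ.support :=
    fun i => (Equiv.Perm.apply_mem_support)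
  rw [permSum_split O ρ (fun i => i ∈ ρ.support) hmem]
  have hone : ρ.subtypePerm (fun i => not_congr (hmem i))
      = (1 : Equiv.Perm {i : Fin k // ¬ i ∈ ρ.support}) := by
    apply Equiv.ext
    intro i
    apply Subtype.ext
    show ρ (i : Fin k) = (i : Fin k)
    exact Equiv.Perm.notMem_support.mp i.2
  rw [hone, permSum_one]
  congr 1
  · refine Eq.trans ?_ (permSum_support_eq O ρ hmem)
    exact @permSum_congr ι _ O {x // x ∈ ρ.support} {x // x ∈ ρ.support}
      (Subtype.fintype fun i => i ∈ ρ.support) _ (Finset.Subtype.fintype ρ.support) _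
      (Equiv.refl _) (ρ.subtypePerm hmem) (ρ.subtypePerm hmem) (fun i => rfl)
  · have h3 : Fintype.card {i : Fin k // ¬ i ∈ ρ.support} = k - ρ.support.card := by
      rw [Fintype.card_subtype_compl, Fintype.card_fin]
      congr 1
      exact (Fintype.card_congr (Equiv.refl _)).trans (Fintype.card_coe _)
    rw [h3]
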